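/- The normal mode copula has zero lower and upper tail dependence: lim_{u→0⁺} C_NM(u,u)/u = 0 and lim_{u→1⁻} (1 - 2u + C_NM(u,u))/(1-u) = 0. -/

import Mathlib

noncomputable def NM (κ1 κ2 : ℕ) (θ u1 u2 : ℝ) : ℝ :=
  u1 * u2 + θ / (κ1 * κ2 * Real.pi ^ 2) * Real.sin (κ1 * Real.pi * u1) * Real.sin (κ2 * Real.pi * u2)

lemma sin_bound_zero (κ : ℕ) (u : ℝ) : |Real.sin (κ * Real.pi * u)| ≤ κ * Real.pi * |u| := by
  calc |Real.sin (κ * Real.pi * u)| ≤ |κ * Real.pi * u| := Real.abs_sin_le_abs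
    _ = κ * Real.pi * |u| := by
        rw [abs_mul, abs_of_nonneg (by positivity : (0:ℝ) ≤ (κ:ℝ) * Real.pi)]

lemma sin_bound_one (κ : ℕ) (u : ℝ) : |Real.sin (κ * Real.pi * u)| ≤ κ * Real.pi * |1 - u| := by
  have h : (κ:ℝ) * Real.pi * u = κ * Real.pi - κ * Real.pi * (1 - u) := by ring
  rw [h, Real.sin_nat_mul_pi_sub]
  rw [abs_neg, abs_mul, abs_pow, abs_neg, abs_one, one_pow, one_mul]
  calc |Real.sin (κ * Real.pi * (1 - u))| ≤ |κ * Real.pi * (1 - u)| := Real.abs_sin_le_abs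
    _ = κ * Real.pi * |1 - u| := by
        rw [abs_mul, abs_of_nonneg (by positivity : (0:ℝ) ≤ (κ:ℝ) * Real.pi)]

lemma term_bound (κ1 κ2 : ℕ) (hκ1 : 1 ≤ κ1) (hκ2 : 1 ≤ κ2) (θ : ℝ)
    (hθ : -1 ≤ θ ∧ θ ≤ 1) (u v : ℝ)
    (h1 : |Real.sin (κ1 * Real.pi * u)| ≤ κ1 * Real.pi * |v|)
    (h2 : |Real.sin (κ2 * Real.pi * u)| ≤ κ2 * Real.pi * |v|) :
    |θ / (κ1 * κ2 * Real.pi ^ 2) * Real.sin (κ1 * Real.pi * u) * Real.sin (κ2 * Real.pi * u)|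
      ≤ |v| ^ 2 := by
  have hk1 : (0:ℝ) < κ1 := by exact_mod_cast hκ1
  have hk2 : (0:ℝ) < κ2 := by exact_mod_cast hκ2
  have hpi := Real.pi_pos
  have hD : (0:ℝ) < (κ1 : ℝ) * κ2 * Real.pi ^ 2 := by positivity
  have hθ1 : |θ| ≤ 1 := abs_le.mpr hθ
  rw [abs_mul, abs_mul, abs_div, abs_of_pos hD]
  have hs1 : 0 ≤ |Real.sin (κ1 * Real.pi * u)| := abs_nonneg _
  have hs2 : 0 ≤ |Real.sin (κ2 * Real.pi * u)| := abs_nonneg _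
  have key : |Real.sin (κ1 * Real.pi * u)| * |Real.sin (κ2 * Real.pi * u)|
      ≤ ((κ1:ℝ) * κ2 * Real.pi ^ 2) * |v| ^ 2 := by
    calc |Real.sin (κ1 * Real.pi * u)| * |Real.sin (κ2 * Real.pi * u)|
        ≤ (κ1 * Real.pi * |v|) * (κ2 * Real.pi * |v|) := by
          apply mul_le_mul h1 h2 hs2 (by positivity)
      _ = ((κ1:ℝ) * κ2 * Real.pi ^ 2) * |v| ^ 2 := by ring
  calc |θ| / ((κ1:ℝ) * κ2 * Real.pi ^ 2) * |Real.sin (κ1 * Real.pi * u)| * |Real.sin (κ2 * Real.pi * u)|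
      = |θ| / ((κ1:ℝ) * κ2 * Real.pi ^ 2) * (|Real.sin (κ1 * Real.pi * u)| * |Real.sin (κ2 * Real.pi * u)|) := by ring
    _ ≤ |θ| / ((κ1:ℝ) * κ2 * Real.pi ^ 2) * (((κ1:ℝ) * κ2 * Real.pi ^ 2) * |v| ^ 2) := by
        apply mul_le_mul_of_nonneg_left key (by positivity)
    _ = |θ| * |v| ^ 2 := by field_simp
    _ ≤ 1 * |v| ^ 2 := by
        apply mul_le_mul_of_nonneg_right hθ1 (by positivity)
    _ = |v| ^ 2 := one_mul _

theorem stmt_10 (κ1 κ2 : ℕ) (hκ1 : 1 ≤ κ1) (hκ2 : 1 ≤ κ2) (θ : ℝ)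
    (hθ : -1 ≤ θ ∧ θ ≤ 1) :
    Filter.Tendsto (fun u : ℝ => NM κ1 κ2 θ u u / u)
      (nhdsWithin 0 (Set.Ioi 0)) (nhds 0) ∧
    Filter.Tendsto (fun u : ℝ => (1 - 2 * u + NM κ1 κ2 θ u u) / (1 - u))
      (nhdsWithin 1 (Set.Iio 1)) (nhds 0) := by
  constructor
  · apply squeeze_zero_norm' (a := fun u : ℝ => 2 * |u|)
    · filter_upwards [self_mem_nhdsWithin] with u (hu : 0 < u)
      have hb := term_bound κ1 κ2 hκ1 hκ2 θ hθ u u (sin_bound_zero κ1 u) (sin_bound_zero κ2 u)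
      have hnum : |NM κ1 κ2 θ u u| ≤ 2 * |u| ^ 2 := by
        unfold NM
        calc |u * u + θ / (κ1 * κ2 * Real.pi ^ 2) * Real.sin (κ1 * Real.pi * u) * Real.sin (κ2 * Real.pi * u)|
            ≤ |u * u| + |θ / (κ1 * κ2 * Real.pi ^ 2) * Real.sin (κ1 * Real.pi * u) * Real.sin (κ2 * Real.pi * u)| := abs_add_le _ _
          _ ≤ |u| ^ 2 + |u| ^ 2 := by
              refine add_le_add ?_ hb
              rw [abs_mul]; ring_nf; rfl
          _ = 2 * |u| ^ 2 := by ring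
      rw [Real.norm_eq_abs, abs_div]
      rw [div_le_iff₀ (by positivity : (0:ℝ) < |u|)]
      calc |NM κ1 κ2 θ u u| ≤ 2 * |u| ^ 2 := hnum
        _ = 2 * |u| * |u| := by ring
    · have : Filter.Tendsto (fun u : ℝ => 2 * |u|) (nhds 0) (nhds 0) := by
        simpa using (show Continuous (fun u : ℝ => 2 * |u|) from continuous_const.mul continuous_abs).tendsto (0:ℝ)
      exact this.mono_left nhdsWithin_le_nhds
  · apply squeeze_zero_norm' (a := fun u : ℝ => 2 * |1 - u|)
    · filter_upwards [self_mem_nhdsWithin] with u (hu : u < 1)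
      have hb := term_bound κ1 κ2 hκ1 hκ2 θ hθ u (1 - u) (sin_bound_one κ1 u) (sin_bound_one κ2 u)
      have hnum : |1 - 2 * u + NM κ1 κ2 θ u u| ≤ 2 * |1 - u| ^ 2 := by
        have heq : 1 - 2 * u + NM κ1 κ2 θ u u
            = (1 - u) * (1 - u) + θ / (κ1 * κ2 * Real.pi ^ 2) * Real.sin (κ1 * Real.pi * u) * Real.sin (κ2 * Real.pi * u) := by
          unfold NM; ring
        rw [heq]
        calc |(1 - u) * (1 - u) + θ / (κ1 * κ2 * Real.pi ^ 2) * Real.sin (κ1 * Real.pi * u) * Real.sin (κ2 * Real.pi * u)|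
            ≤ |(1 - u) * (1 - u)| + |θ / (κ1 * κ2 * Real.pi ^ 2) * Real.sin (κ1 * Real.pi * u) * Real.sin (κ2 * Real.pi * u)| := abs_add_le _ _
          _ ≤ |1 - u| ^ 2 + |1 - u| ^ 2 := by
              refine add_le_add ?_ hb
              rw [abs_mul]; ring_nf; rfl
          _ = 2 * |1 - u| ^ 2 := by ring
      rw [Real.norm_eq_abs, abs_div]
      have h1u : (0:ℝ) < |1 - u| := by
        rw [abs_pos]; linarith
      rw [div_le_iff₀ h1u]
      calc |1 - 2 * u + NM κ1 κ2 θ u u| ≤ 2 * |1 - u| ^ 2 := hnum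
        _ = 2 * |1 - u| * |1 - u| := by ring
    · have : Filter.Tendsto (fun u : ℝ => 2 * |1 - u|) (nhds 1) (nhds 0) := by
        have hc : Continuous (fun u : ℝ => 2 * |1 - u|) := by continuity
        have := hc.tendsto 1
        simp only [sub_self, abs_zero, mul_zero] at this
        exact this
      exact this.mono_left nhdsWithin_le_nhds
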